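/- Let R be a G-graded unital ring such that each R_g is a nonzero simple R_e-bimodule and R_g ≅ R_h (as R_e-bimodules) only when g = h. If P is an R_e-sub-bimodule of R and x ∈ P is nonzero, then R_g ⊆ P for every g in the support of x. In particular, P = ⊕_{s∈S} R_s for some subset S ⊆ G. -/

import Mathlib

open DirectSum Pointwise

namespace Controlled

variable {G R : Type*} [AddGroup G] [DecidableEq G] [Ring R]

/-- `P` is an `R_e`-sub-bimodule of `R` (w.r.t. the grading `𝒜`, written additively,
so `R_e = 𝒜 0`). -/
def IsSubBimodule (𝒜 : G → AddSubgroup R) (P : AddSubgroup R) : Prop :=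
  ∀ a ∈ 𝒜 0, ∀ x ∈ P, a * x ∈ P ∧ x * a ∈ P

/-- The `R_e`-bimodule `R_H = ⊕_{h ∈ H} R_h` (internally, the subgroup generated by
the `R_h`, `h ∈ H`; the sum is automatically direct). `R_∅ = ⊥ = {0}`. -/
def RH (𝒜 : G → AddSubgroup R) (H : Set G) : AddSubgroup R := ⨆ h ∈ H, 𝒜 h

/-- An `R_e`-bimodule isomorphism between additive subgroups `P` and `Q` of `R`:
an additive equivalence compatible with left and right multiplication by `R_e = 𝒜 0`. -/
structure BimodIso (𝒜 : G → AddSubgroup R) (P Q : AddSubgroup R) where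
  toEquiv : P ≃+ Q
  map_left : ∀ (a x : R), a ∈ 𝒜 0 → ∀ (hx : x ∈ P) (hax : a * x ∈ P),
    (toEquiv ⟨a * x, hax⟩ : R) = a * (toEquiv ⟨x, hx⟩ : R)
  map_right : ∀ (a x : R), a ∈ 𝒜 0 → ∀ (hx : x ∈ P) (hxa : x * a ∈ P),
    (toEquiv ⟨x * a, hxa⟩ : R) = (toEquiv ⟨x, hx⟩ : R) * a

/-- `R` is `G`-controlled: `H ↦ R_H` is a bijection from subsets of `G` onto the
`R_e`-sub-bimodules of `R`, and `R_S ≅ R_T` (as `R_e`-bimodules) iff `S = T`. -/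
def IsControlled (𝒜 : G → AddSubgroup R) : Prop :=
  (∀ H : Set G, IsSubBimodule 𝒜 (RH 𝒜 H)) ∧
  Function.Injective (RH 𝒜) ∧
  (∀ P : AddSubgroup R, IsSubBimodule 𝒜 P → ∃ H : Set G, RH 𝒜 H = P) ∧
  (∀ S T : Set G, Nonempty (BimodIso 𝒜 (RH 𝒜 S) (RH 𝒜 T)) ↔ S = T)

/-- `P` is a (nonzero) simple `R_e`-bimodule contained in `R`. -/
def IsSimpleBimod (𝒜 : G → AddSubgroup R) (P : AddSubgroup R) : Prop :=
  P ≠ ⊥ ∧ ∀ Q : AddSubgroup R, Q ≤ P → IsSubBimodule 𝒜 Q → Q = ⊥ ∨ Q = P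

/-- The product `AB` of two additive subgroups of `R`: all finite sums of products. -/
def mulSub (A B : AddSubgroup R) : AddSubgroup R :=
  AddSubgroup.closure ((A : Set R) * (B : Set R))

/-- `R` is strongly graded: `R_g R_h = R_{g+h}` for all `g, h`. -/
def IsStronglyGraded (𝒜 : G → AddSubgroup R) : Prop :=
  ∀ g h : G, mulSub (𝒜 g) (𝒜 h) = 𝒜 (g + h)

/-- `C_R(R_e) = Z(R_e)` as subsets of `R`. -/
def CentralizerEqCenter (𝒜 : G → AddSubgroup R) : Prop :=
  {x : R | ∀ r ∈ 𝒜 0, x * r = r * x} = {x : R | x ∈ 𝒜 0 ∧ ∀ r ∈ 𝒜 0, x * r = r * x}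

/-- A two-sided ideal `I` is graded if each homogeneous component of each of its
elements again lies in `I` (equivalently, `I = ⊕_g (I ∩ R_g)`). -/
def IsGradedIdeal (𝒜 : G → AddSubgroup R) [GradedRing 𝒜] (I : TwoSidedIdeal R) : Prop :=
  ∀ x ∈ I, ∀ g : G, (DirectSum.decompose 𝒜 x g : R) ∈ I

/-- `R` is graded simple: the only graded two-sided ideals are `{0}` and `R`. -/
def IsGradedSimple (𝒜 : G → AddSubgroup R) [GradedRing 𝒜] : Prop :=
  ∀ I : TwoSidedIdeal R, IsGradedIdeal 𝒜 I → I = ⊥ ∨ I = ⊤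

end Controlled


namespace Stmt7Aux

open DirectSum

variable {G R : Type*} [AddGroup G] [DecidableEq G] [Ring R]
variable (𝒜 : G → AddSubgroup R) [GradedRing 𝒜]

/-- projection onto degree `g` component, as an additive hom `R →+ R`. -/
noncomputable def pj (g : G) : R →+ R where
  toFun x := (decompose 𝒜 x g : R)
  map_zero' := by simp
  map_add' x y := by simp

lemma pj_mem (g : G) (x : R) : pj 𝒜 g x ∈ 𝒜 g := (decompose 𝒜 x g).2

lemma pj_left {a : R} (ha : a ∈ 𝒜 0) (g : G) (x : R) :
    pj 𝒜 g (a * x) = a * pj 𝒜 g x := by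
  have := DirectSum.coe_decompose_mul_add_of_left_mem 𝒜 (i := 0) (j := g) (b := x) ha
  rwa [zero_add] at this

lemma pj_right {b : R} (hb : b ∈ 𝒜 0) (g : G) (x : R) :
    pj 𝒜 g (x * b) = pj 𝒜 g x * b := by
  have := DirectSum.coe_decompose_mul_add_of_right_mem 𝒜 (i := g) (j := 0) (a := x) hb
  rwa [add_zero] at this

lemma pj_of_mem_same {g : G} {x : R} (hx : x ∈ 𝒜 g) : pj 𝒜 g x = x :=
  DirectSum.decompose_of_mem_same 𝒜 hx

lemma pj_of_mem_ne {g h : G} {x : R} (hx : x ∈ 𝒜 g) (hgh : g ≠ h) : pj 𝒜 h x = 0 :=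
  DirectSum.decompose_of_mem_ne 𝒜 hx hgh

open Classical in
/-- the support of `x` as a finset. -/
noncomputable def sup (x : R) : Finset G := DFinsupp.support (decompose 𝒜 x)

lemma mem_sup {g : G} {x : R} : g ∈ sup 𝒜 x ↔ pj 𝒜 g x ≠ 0 := by
  classical
  simp only [sup, DFinsupp.mem_support_iff, pj, AddMonoidHom.coe_mk, ZeroHom.coe_mk, ne_eq,
    ZeroMemClass.coe_eq_zero]

lemma sum_sup (x : R) : ∑ g ∈ sup 𝒜 x, pj 𝒜 g x = x := by
  classical
  have h := DirectSum.sum_support_decompose 𝒜 (r := x)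
  rw [sup]
  exact h

/-- the sub-bimodule of `R` generated by `x`. -/
def genB (x : R) : AddSubgroup R :=
  AddSubgroup.closure {r | ∃ a ∈ 𝒜 0, ∃ b ∈ 𝒜 0, r = a * x * b}

lemma self_mem_genB (x : R) : x ∈ genB 𝒜 x :=
  AddSubgroup.subset_closure ⟨1, SetLike.one_mem_graded 𝒜, 1, SetLike.one_mem_graded 𝒜,
    by simp⟩

lemma genB_le {x : R} {P : AddSubgroup R} (hx : x ∈ P)
    (hP : Controlled.IsSubBimodule 𝒜 P) : genB 𝒜 x ≤ P := by
  rw [genB, AddSubgroup.closure_le]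
  rintro r ⟨a, ha, b, hb, rfl⟩
  exact (hP b hb _ ((hP a ha x hx).1)).2

lemma zero_zero_mem {a b : R} (ha : a ∈ 𝒜 0) (hb : b ∈ 𝒜 0) : a * b ∈ 𝒜 0 := by
  have := SetLike.mul_mem_graded ha hb
  rwa [zero_add] at this

lemma genB_subBimod (x : R) : Controlled.IsSubBimodule 𝒜 (genB 𝒜 x) := by
  intro a ha y hy
  constructor
  · induction hy using AddSubgroup.closure_induction with
    | mem r hr =>
      obtain ⟨a', ha', b', hb', rfl⟩ := hr
      exact AddSubgroup.subset_closure ⟨a * a', zero_zero_mem 𝒜 ha ha', b', hb', by rw [← mul_assoc, ← mul_assoc]⟩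
    | zero => simp [zero_mem]
    | add y z _ _ hy hz => rw [mul_add]; exact add_mem hy hz
    | neg y _ hy => rw [mul_neg]; exact neg_mem hy
  · induction hy using AddSubgroup.closure_induction with
    | mem r hr =>
      obtain ⟨a', ha', b', hb', rfl⟩ := hr
      exact AddSubgroup.subset_closure ⟨a', ha', b' * a, zero_zero_mem 𝒜 hb' ha, by rw [mul_assoc]⟩
    | zero => simp [zero_mem]
    | add y z _ _ hy hz => rw [add_mul]; exact add_mem hy hz
    | neg y _ hy => rw [neg_mul]; exact neg_mem hy

lemma genB_supp {x y : R} (hy : y ∈ genB 𝒜 x) {g : G} (hg : pj 𝒜 g x = 0) :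
    pj 𝒜 g y = 0 := by
  induction hy using AddSubgroup.closure_induction with
  | mem r hr =>
    obtain ⟨a, ha, b, hb, rfl⟩ := hr
    rw [mul_assoc, pj_left 𝒜 ha, pj_right 𝒜 hb, hg, zero_mul, mul_zero]
  | zero => simp
  | add y z _ _ hy hz => rw [map_add, hy, hz, add_zero]
  | neg y _ hy => rw [map_neg, hy, neg_zero]

lemma key (hsimple : ∀ g : G, Controlled.IsSimpleBimod 𝒜 (𝒜 g))
    (hiso : ∀ g h : G, Nonempty (Controlled.BimodIso 𝒜 (𝒜 g) (𝒜 h)) → g = h)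
    (P : AddSubgroup R) (hP : Controlled.IsSubBimodule 𝒜 P) :
    ∀ n : ℕ, ∀ x ∈ P, x ≠ 0 → (sup 𝒜 x).card ≤ n →
      ∀ g : G, pj 𝒜 g x ≠ 0 → 𝒜 g ≤ P := by
  intro n
  induction n with
  | zero =>
    intro x hx hx0 hcard g hg
    have hmem : g ∈ sup 𝒜 x := (mem_sup 𝒜).mpr hg
    rw [Nat.le_zero, Finset.card_eq_zero] at hcard
    rw [hcard] at hmem
    simp at hmem
  | succ n IH =>
    intro x hx hx0 hcard g hg
    set M := genB 𝒜 x with hMdef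
    by_cases hA : ∃ y ∈ M, y ≠ 0 ∧ (sup 𝒜 y).card < (sup 𝒜 x).card
    · -- Case A: some nonzero element of M has strictly smaller support
      obtain ⟨y, hyM, hy0, hylt⟩ := hA
      have hyP : y ∈ P := genB_le 𝒜 hx hP hyM
      have hyne : (sup 𝒜 y).Nonempty := by
        rw [Finset.nonempty_iff_ne_empty]
        intro hemp
        apply hy0
        rw [← sum_sup 𝒜 y, hemp, Finset.sum_empty]
      obtain ⟨h, hh⟩ := hyne
      have hpy : pj 𝒜 h y ≠ 0 := (mem_sup 𝒜).mp hh
      have hAh : 𝒜 h ≤ P := IH y hyP hy0 (by omega) h hpy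
      by_cases hhg : h = g
      · exact hhg ▸ hAh
      · set x' := x - pj 𝒜 h x with hx'def
        have hgx' : pj 𝒜 g x' = pj 𝒜 g x := by
          rw [hx'def, map_sub, pj_of_mem_ne 𝒜 (pj_mem 𝒜 h x) hhg, sub_zero]
        have hx'P : x' ∈ P := sub_mem hx (hAh (pj_mem 𝒜 h x))
        have hx'0 : x' ≠ 0 := fun h0 => hg (by rw [← hgx', h0, map_zero])
        have hsub : sup 𝒜 x' ⊆ (sup 𝒜 x).erase h := by
          intro k hk
          have hk' := (mem_sup 𝒜).mp hk
          rcases eq_or_ne k h with rfl | hkh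
          · exfalso
            apply hk'
            rw [hx'def, map_sub, pj_of_mem_same 𝒜 (pj_mem 𝒜 k x), sub_self]
          · refine Finset.mem_erase.mpr ⟨hkh, (mem_sup 𝒜).mpr ?_⟩
            intro h0
            apply hk'
            rw [hx'def, map_sub, h0, pj_of_mem_ne 𝒜 (pj_mem 𝒜 h x) (Ne.symm hkh), sub_zero]
        have hxh : h ∈ sup 𝒜 x := by
          rw [mem_sup]
          intro h0
          exact hpy (genB_supp 𝒜 hyM h0)
        have hcard' : (sup 𝒜 x').card ≤ n := by
          have h1 := Finset.card_le_card hsub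
          have h2 := Finset.card_erase_of_mem hxh
          omega
        exact IH x' hx'P hx'0 hcard' g (hgx' ▸ hg)
    · -- Case B: every nonzero element of M has full support
      push_neg at hA
      have hsupeq : ∀ y ∈ M, y ≠ 0 → sup 𝒜 y = sup 𝒜 x := by
        intro y hyM hy0
        refine Finset.eq_of_subset_of_card_le ?_ (hA y hyM hy0)
        intro k hk
        rw [mem_sup] at hk ⊢
        intro h0
        exact hk (genB_supp 𝒜 hyM h0)
      have hgx : g ∈ sup 𝒜 x := (mem_sup 𝒜).mpr hg
      have hbij : ∀ h ∈ sup 𝒜 x, ∃ e : M ≃+ ↥(𝒜 h),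
          ∀ m : M, ((e m : ↥(𝒜 h)) : R) = pj 𝒜 h ↑m := by
        intro h hh
        have hx_h : pj 𝒜 h x ≠ 0 := (mem_sup 𝒜).mp hh
        set f : M →+ ↥(𝒜 h) :=
          AddMonoidHom.codRestrict ((pj 𝒜 h).comp M.subtype) (𝒜 h)
            (fun m => pj_mem 𝒜 h ↑m) with hfdef
        have hcoe : ∀ m : M, ((f m : ↥(𝒜 h)) : R) = pj 𝒜 h ↑m := fun m => rfl
        have hinj : Function.Injective f := by
          rw [injective_iff_map_eq_zero]
          intro m hm0
          by_contra hm
          have hm' : (↑m : R) ≠ 0 := fun h0 => hm (Subtype.ext (by simpa using h0))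
          have hseq : sup 𝒜 (↑m : R) = sup 𝒜 x := hsupeq ↑m m.2 hm'
          have hne : pj 𝒜 h (↑m : R) ≠ 0 := (mem_sup 𝒜).mp (hseq ▸ hh)
          apply hne
          rw [← hcoe m, hm0]
          rfl
        have hsurj : Function.Surjective f := by
          have hQle : AddSubgroup.map (pj 𝒜 h) M ≤ 𝒜 h := by
            rintro _ ⟨m, hm, rfl⟩
            exact pj_mem 𝒜 h m
          have hQbi : Controlled.IsSubBimodule 𝒜 (AddSubgroup.map (pj 𝒜 h) M) := by
            intro a ha z hz
            obtain ⟨m, hm, rfl⟩ := hz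
            exact ⟨⟨a * m, (genB_subBimod 𝒜 x a ha m hm).1, by rw [pj_left 𝒜 ha]⟩,
                   ⟨m * a, (genB_subBimod 𝒜 x a ha m hm).2, by rw [pj_right 𝒜 ha]⟩⟩
          have hQ : AddSubgroup.map (pj 𝒜 h) M = 𝒜 h := by
            rcases (hsimple h).2 _ hQle hQbi with hbot | heq
            · exfalso
              have hmm : pj 𝒜 h x ∈ AddSubgroup.map (pj 𝒜 h) M :=
                ⟨x, self_mem_genB 𝒜 x, rfl⟩
              rw [hbot] at hmm
              exact hx_h (by simpa using hmm)
            · exact heq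
          intro z
          have hz : (↑z : R) ∈ AddSubgroup.map (pj 𝒜 h) M := by rw [hQ]; exact z.2
          obtain ⟨m, hm, hpm⟩ := hz
          exact ⟨⟨m, hm⟩, Subtype.ext hpm⟩
        exact ⟨AddEquiv.ofBijective f ⟨hinj, hsurj⟩, fun m => hcoe m⟩
      have heqg : ∀ h ∈ sup 𝒜 x, h = g := by
        intro h hh
        obtain ⟨eh, heh⟩ := hbij h hh
        obtain ⟨eg, hegg⟩ := hbij g hgx
        refine hiso h g ⟨⟨eh.symm.trans eg, ?_, ?_⟩⟩
        · intro a z ha hz haz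
          set m := eh.symm ⟨z, hz⟩ with hmdef
          have hmz : pj 𝒜 h (↑m : R) = z := by
            have := heh m
            rw [hmdef, AddEquiv.apply_symm_apply] at this
            exact this.symm
          have ham : a * (↑m : R) ∈ M := (genB_subBimod 𝒜 x a ha ↑m m.2).1
          have h1 : eh ⟨a * ↑m, ham⟩ = ⟨a * z, haz⟩ :=
            Subtype.ext (by rw [heh, pj_left 𝒜 ha, hmz])
          have h2 : eh.symm ⟨a * z, haz⟩ = ⟨a * ↑m, ham⟩ := by
            rw [← h1, AddEquiv.symm_apply_apply]
          rw [AddEquiv.trans_apply, AddEquiv.trans_apply, h2, ← hmdef]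
          simp only [hegg]
          exact pj_left 𝒜 ha g ↑m
        · intro a z ha hz hza
          set m := eh.symm ⟨z, hz⟩ with hmdef
          have hmz : pj 𝒜 h (↑m : R) = z := by
            have := heh m
            rw [hmdef, AddEquiv.apply_symm_apply] at this
            exact this.symm
          have ham : (↑m : R) * a ∈ M := (genB_subBimod 𝒜 x a ha ↑m m.2).2
          have h1 : eh ⟨↑m * a, ham⟩ = ⟨z * a, hza⟩ :=
            Subtype.ext (by rw [heh, pj_right 𝒜 ha, hmz])
          have h2 : eh.symm ⟨z * a, hza⟩ = ⟨↑m * a, ham⟩ := by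
            rw [← h1, AddEquiv.symm_apply_apply]
          rw [AddEquiv.trans_apply, AddEquiv.trans_apply, h2, ← hmdef]
          simp only [hegg]
          exact pj_right 𝒜 ha g ↑m
      have hxg : x ∈ 𝒜 g := by
        have hsx : sup 𝒜 x = {g} :=
          Finset.eq_singleton_iff_unique_mem.mpr ⟨hgx, heqg⟩
        have hsum := sum_sup 𝒜 x
        rw [hsx, Finset.sum_singleton] at hsum
        rw [← hsum]
        exact pj_mem 𝒜 g x
      have hPg : Controlled.IsSubBimodule 𝒜 (P ⊓ 𝒜 g) := by
        intro a ha y hy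
        rw [AddSubgroup.mem_inf] at hy
        constructor
        · rw [AddSubgroup.mem_inf]
          refine ⟨(hP a ha y hy.1).1, ?_⟩
          have := SetLike.mul_mem_graded ha hy.2
          rwa [zero_add] at this
        · rw [AddSubgroup.mem_inf]
          refine ⟨(hP a ha y hy.1).2, ?_⟩
          have := SetLike.mul_mem_graded hy.2 ha
          rwa [add_zero] at this
      rcases (hsimple g).2 (P ⊓ 𝒜 g) inf_le_right hPg with hbot | heqPg
      · exfalso
        have hxin : x ∈ P ⊓ 𝒜 g := AddSubgroup.mem_inf.mpr ⟨hx, hxg⟩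
        rw [hbot] at hxin
        exact hx0 (by simpa using hxin)
      · rw [← heqPg]
        exact inf_le_left

end Stmt7Aux

variable {G R : Type*} [AddGroup G] [DecidableEq G] [Ring R]


/-- If each `R_g` is a nonzero simple `R_e`-bimodule and `R_g ≅ R_h` only
for `g = h`, then for any `R_e`-sub-bimodule `P ⊆ R` and nonzero `x ∈ P`, `R_g ⊆ P`
for every `g` in the support of `x`; in particular `P = ⊕_{s∈S} R_s` for some `S ⊆ G`. -/
theorem stmt7 (𝒜 : G → AddSubgroup R) [GradedRing 𝒜]
    (hsimple : ∀ g : G, Controlled.IsSimpleBimod 𝒜 (𝒜 g))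
    (hiso : ∀ g h : G, Nonempty (Controlled.BimodIso 𝒜 (𝒜 g) (𝒜 h)) → g = h)
    (P : AddSubgroup R) (hP : Controlled.IsSubBimodule 𝒜 P) :
    (∀ x ∈ P, x ≠ 0 → ∀ g : G, (DirectSum.decompose 𝒜 x g : R) ≠ 0 → 𝒜 g ≤ P) ∧
    ∃ S : Set G, P = Controlled.RH 𝒜 S := by
  have h1 : ∀ x ∈ P, x ≠ 0 → ∀ g : G, (DirectSum.decompose 𝒜 x g : R) ≠ 0 → 𝒜 g ≤ P :=
    fun x hx hx0 g hg =>
      Stmt7Aux.key 𝒜 hsimple hiso P hP (Stmt7Aux.sup 𝒜 x).card x hx hx0 le_rfl g hg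
  refine ⟨h1, {g | 𝒜 g ≤ P}, le_antisymm ?_ (iSup₂_le fun h hh => hh)⟩
  intro x hx
  by_cases hx0 : x = 0
  · simp [hx0, zero_mem]
  · rw [← Stmt7Aux.sum_sup 𝒜 x]
    refine AddSubgroup.sum_mem _ fun h hh => ?_
    have hS : 𝒜 h ≤ P := h1 x hx hx0 h ((Stmt7Aux.mem_sup 𝒜).mp hh)
    have hle : 𝒜 h ≤ Controlled.RH 𝒜 {g | 𝒜 g ≤ P} := by
      rw [Controlled.RH]; exact le_iSup₂_of_le h hS le_rfl
    exact hle (Stmt7Aux.pj_mem 𝒜 h x)
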